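/- For any real p×q matrix X, the matrix [[√(I + XXᵀ), X], [Xᵀ, √(I + XᵀX)]] equals diag(U, V) · [[Ch, 0, Sh], [0, I_{p−q}, 0], [Sh, 0, Ch]] · diag(U, V)ᵀ for some U ∈ O(p), V ∈ O(q), and diagonal Ch = diag(cosh θ_l), Sh = diag(sinh θ_l); in particular X = U' Sh' V'ᵀ exhibits the singular value decomposition of X (with appropriate rectangular padding of Sh). -/

import Mathlib

open Matrix

lemma psd_eq_of_sq_eq_sq {n : Type*} [Fintype n] [DecidableEq n] {A B : Matrix n n ℝ}
    (hA : A.PosSemidef) (hB : B.PosSemidef) (h : A ^ 2 = B ^ 2) : A = B := by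
  open scoped MatrixOrder in
  rw [← CFC.sqrt_sq A hA.nonneg, ← CFC.sqrt_sq B hB.nonneg, h]

set_option maxHeartbeats 1000000 in
/-- Folding of the hyperbolic CS decomposition: for a real `p × q` matrix `X` (`p ≥ q`,
rows indexed by `Fin q ⊕ Fin (p-q)`), with `R₁ = √(1 + XXᵀ)` and `R₂ = √(1 + XᵀX)` the
symmetric positive definite square roots, the block matrix `[[R₁, X], [Xᵀ, R₂]]` equals
`diag(U,V) · [[Ch, 0, Sh], [0, I, 0], [Sh, 0, Ch]] · diag(U,V)ᵀ`, and in particular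
`X = U · Sh_padded · Vᵀ` is a singular value decomposition of `X`. -/
theorem hcsd_folding_svd (p q : ℕ) (hpq : q ≤ p)
    (X : Matrix (Fin q ⊕ Fin (p - q)) (Fin q) ℝ)
    (R₁ : Matrix (Fin q ⊕ Fin (p - q)) (Fin q ⊕ Fin (p - q)) ℝ)
    (R₂ : Matrix (Fin q) (Fin q) ℝ)
    (hR₁ : R₁.PosDef) (hR₁sq : R₁ * R₁ = 1 + X * Xᵀ)
    (hR₂ : R₂.PosDef) (hR₂sq : R₂ * R₂ = 1 + Xᵀ * X) :
    ∃ (U : Matrix (Fin q ⊕ Fin (p - q)) (Fin q ⊕ Fin (p - q)) ℝ)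
      (V : Matrix (Fin q) (Fin q) ℝ) (θ : Fin q → ℝ),
      Uᵀ * U = 1 ∧ Vᵀ * V = 1 ∧
      Matrix.fromBlocks R₁ X Xᵀ R₂ =
        Matrix.fromBlocks U 0 0 V *
          Matrix.fromBlocks
            (Matrix.fromBlocks (Matrix.diagonal fun l => Real.cosh (θ l)) 0 0 1)
            (Matrix.of fun i j => match i with
              | Sum.inl i' => if i' = j then Real.sinh (θ j) else 0
              | Sum.inr _ => 0)
            (Matrix.of fun i j => match j with
              | Sum.inl j' => if i = j' then Real.sinh (θ i) else 0
              | Sum.inr _ => 0)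
            (Matrix.diagonal fun l => Real.cosh (θ l)) *
          (Matrix.fromBlocks U 0 0 V)ᵀ ∧
      X = U * (Matrix.of fun (i : Fin q ⊕ Fin (p - q)) (j : Fin q) => match i with
              | Sum.inl i' => if i' = j then Real.sinh (θ j) else 0
              | Sum.inr _ => 0) * Vᵀ := by
  classical
  -- spectral decomposition of XᵀX
  have hPSD : (Xᵀ * X).PosSemidef := by
    simpa [conjTranspose_eq_transpose_of_trivial] using posSemidef_conjTranspose_mul_self X
  have hH : (Xᵀ * X).IsHermitian := hPSD.1
  set V : Matrix (Fin q) (Fin q) ℝ := (hH.eigenvectorUnitary : Matrix (Fin q) (Fin q) ℝ)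
    with hVdef
  set d : Fin q → ℝ := hH.eigenvalues with hd
  have hdnn : ∀ l, 0 ≤ d l := hPSD.eigenvalues_nonneg
  have hspec : Xᵀ * X = V * diagonal d * Vᵀ := by
    have h := hH.spectral_theorem
    rw [Unitary.conjStarAlgAut_apply, Matrix.star_eq_conjTranspose, conjTranspose_eq_transpose_of_trivial] at h
    simpa using h
  have hVV : Vᵀ * V = 1 := by
    have h := Matrix.mem_unitaryGroup_iff'.mp hH.eigenvectorUnitary.2
    rwa [Matrix.star_eq_conjTranspose, conjTranspose_eq_transpose_of_trivial] at h
  have hVVt : V * Vᵀ = 1 := by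
    have h := Matrix.mem_unitaryGroup_iff.mp hH.eigenvectorUnitary.2
    rwa [Matrix.star_eq_conjTranspose, conjTranspose_eq_transpose_of_trivial] at h
  set σ : Fin q → ℝ := fun l => Real.sqrt (d l) with hσ
  set θ : Fin q → ℝ := fun l => Real.arsinh (σ l) with hθ
  have hσsq : ∀ l, σ l * σ l = d l := fun l => Real.mul_self_sqrt (hdnn l)
  have hsinh : ∀ l, Real.sinh (θ l) = σ l := fun l => Real.sinh_arsinh (σ l)
  have hcosh2 : ∀ l, Real.cosh (θ l) * Real.cosh (θ l) = 1 + d l := by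
    intro l
    have := Real.cosh_sq (θ l)
    rw [← hσsq l, ← hsinh l]
    nlinarith [this]
  -- W = X * V has orthogonal columns
  set W : Matrix (Fin q ⊕ Fin (p - q)) (Fin q) ℝ := X * V with hWdef
  have hW : Wᵀ * W = diagonal d := by
    have : Wᵀ * W = Vᵀ * (Xᵀ * X) * V := by
      rw [hWdef, transpose_mul]; simp only [Matrix.mul_assoc]
    rw [this, hspec]
    calc Vᵀ * (V * diagonal d * Vᵀ) * V = (Vᵀ * V) * diagonal d * (Vᵀ * V) := by
          simp only [Matrix.mul_assoc]
    _ = diagonal d := by rw [hVV]; simp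
  have hWcol : ∀ l m, (∑ r, W r l * W r m) = diagonal d l m := by
    intro l m
    have := congrFun (congrFun hW l) m
    simpa [Matrix.mul_apply, transpose_apply] using this
  have hW0 : ∀ l, d l = 0 → ∀ r, W r l = 0 := by
    intro l h0 r
    have hsum : ∑ r, W r l * W r l = 0 := by rw [hWcol]; simp [diagonal, h0]
    have := (Finset.sum_eq_zero_iff_of_nonneg
      (fun i _ => mul_self_nonneg (W i l))).mp hsum r (Finset.mem_univ r)
    exact mul_self_eq_zero.mp this
  -- orthonormal partial family of normalized columns
  set v : (Fin q ⊕ Fin (p - q)) → EuclideanSpace ℝ (Fin q ⊕ Fin (p - q)) :=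
    fun i => Sum.elim (fun l => WithLp.toLp 2 (fun r => W r l / σ l))
      (fun _ => 0) i with hv
  set s : Set (Fin q ⊕ Fin (p - q)) := Sum.inl '' {l | d l ≠ 0} with hs
  have horth : Orthonormal ℝ (s.restrict v) := by
    rw [orthonormal_iff_ite]
    rintro ⟨i, hi⟩ ⟨j, hj⟩
    obtain ⟨l, hl, rfl⟩ := hi
    obtain ⟨m, hm, rfl⟩ := hj
    have hinner : (inner ℝ (s.restrict v ⟨Sum.inl l, ⟨l, hl, rfl⟩⟩)
        (s.restrict v ⟨Sum.inl m, ⟨m, hm, rfl⟩⟩) : ℝ)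
        = ∑ r, (W r l / σ l) * (W r m / σ m) := by
      simp only [PiLp.inner_apply, RCLike.inner_apply, conj_trivial]
      exact Finset.sum_congr rfl fun r _ => mul_comm _ _
    rw [hinner]
    have key : (∑ r, W r l / σ l * (W r m / σ m))
        = (∑ r, W r l * W r m) / (σ l * σ m) := by
      rw [Finset.sum_div]
      exact Finset.sum_congr rfl fun r _ => by ring
    rw [key, hWcol]
    by_cases h : l = m
    · subst h
      simp only [diagonal_apply_eq, if_pos rfl, hσsq l]
      simp [div_self hl]
    · rw [diagonal_apply_ne _ h]
      simp [h, Sum.inl.injEq, Subtype.mk.injEq, Subtype.ext_iff]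
  obtain ⟨b, hb⟩ := horth.exists_orthonormalBasis_extension_of_card_eq
    (finrank_euclideanSpace (𝕜 := ℝ))
  set U : Matrix (Fin q ⊕ Fin (p - q)) (Fin q ⊕ Fin (p - q)) ℝ :=
    Matrix.of fun r c => b c r with hUdef
  have hU : Uᵀ * U = 1 := by
    ext c c'
    have h2 := (orthonormal_iff_ite.mp b.orthonormal) c c'
    simp only [PiLp.inner_apply, RCLike.inner_apply, conj_trivial] at h2
    simpa [Matrix.mul_apply, Matrix.one_apply, hUdef, mul_comm] using h2
  have hUUt : U * Uᵀ = 1 := mul_eq_one_comm.mp hU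
  -- the padded sinh matrix
  set S : Matrix (Fin q ⊕ Fin (p - q)) (Fin q) ℝ :=
    Matrix.of fun i j => match i with
      | Sum.inl i' => if i' = j then Real.sinh (θ j) else 0
      | Sum.inr _ => 0 with hSdef
  have hWUS : W = U * S := by
    ext r l
    rw [Matrix.mul_apply, Fintype.sum_sum_type]
    have h1 : ∀ i' : Fin q, U r (Sum.inl i') * S (Sum.inl i') l
        = b (Sum.inl i') r * (if i' = l then Real.sinh (θ l) else 0) := fun i' => rfl
    have h2 : ∀ i' : Fin (p - q), U r (Sum.inr i') * S (Sum.inr i') l = 0 := by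
      intro i'; simp [hSdef]
    simp only [h1, h2, Finset.sum_const_zero, add_zero, mul_ite, mul_zero,
      Finset.sum_ite_eq', Finset.mem_univ, if_pos]
    rw [hsinh l]
    by_cases h0 : d l = 0
    · rw [hW0 l h0 r]
      have : σ l = 0 := by rw [hσ]; simp [h0]
      rw [this, mul_zero]
    · have hbl := hb (Sum.inl l) ⟨l, h0, rfl⟩
      have : b (Sum.inl l) r = W r l / σ l := by rw [hbl]; rfl
      rw [this]
      have hσne : σ l ≠ 0 := fun hc => h0 (by rw [← hσsq l, hc, mul_zero])
      field_simp
  have hXUSV : X = U * S * Vᵀ := by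
    have hXW : X = W * Vᵀ := by
      rw [hWdef, Matrix.mul_assoc, hVVt, Matrix.mul_one]
    rw [hXW, hWUS]
  -- R₂ equality via uniqueness of psd square root
  have hChps : (diagonal fun l => Real.cosh (θ l)).PosSemidef := by
    rw [show (diagonal fun l => Real.cosh (θ l)) =
      Matrix.diagonal fun l => Real.cosh (θ l) from rfl]
    exact posSemidef_diagonal_iff.mpr fun l => (Real.cosh_pos (θ l)).le
  have hR2rhs : (V * diagonal (fun l => Real.cosh (θ l)) * Vᵀ).PosSemidef := by
    have := hChps.mul_mul_conjTranspose_same V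
    rwa [conjTranspose_eq_transpose_of_trivial] at this
  have hR2eq : R₂ = V * diagonal (fun l => Real.cosh (θ l)) * Vᵀ := by
    refine psd_eq_of_sq_eq_sq hR₂.posSemidef hR2rhs ?_
    rw [pow_two, pow_two, hR₂sq]
    calc (1 : Matrix (Fin q) (Fin q) ℝ) + Xᵀ * X
        = V * Vᵀ + V * diagonal d * Vᵀ := by rw [hVVt, hspec]
      _ = V * (diagonal fun l => Real.cosh (θ l) * Real.cosh (θ l)) * Vᵀ := by
          rw [show (diagonal fun l => Real.cosh (θ l) * Real.cosh (θ l))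
              = 1 + diagonal d by
            rw [← diagonal_one, diagonal_add]
            exact congrArg diagonal (funext fun l => by simpa using (hcosh2 l))]
          noncomm_ring
      _ = (V * diagonal (fun l => Real.cosh (θ l)) * Vᵀ)
          * (V * diagonal (fun l => Real.cosh (θ l)) * Vᵀ) := by
          rw [← diagonal_mul_diagonal]
          rw [show (V * diagonal (fun l => Real.cosh (θ l)) * Vᵀ)
              * (V * diagonal (fun l => Real.cosh (θ l)) * Vᵀ)
              = V * diagonal (fun l => Real.cosh (θ l)) * (Vᵀ * V)
                * (diagonal (fun l => Real.cosh (θ l)) * Vᵀ) from by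
            simp only [Matrix.mul_assoc]]
          rw [hVV, Matrix.mul_one]
          simp only [Matrix.mul_assoc]
  -- R₁ equality
  set Cb : Matrix (Fin q ⊕ Fin (p - q)) (Fin q ⊕ Fin (p - q)) ℝ :=
    Matrix.fromBlocks (diagonal fun l => Real.cosh (θ l)) 0 0 1 with hCbdef
  have hCbdiag : Cb = diagonal (Sum.elim (fun l => Real.cosh (θ l)) (fun _ => 1)) := by
    rw [hCbdef, ← Matrix.diagonal_one, ← Matrix.fromBlocks_diagonal]
  have hSS : S * Sᵀ = diagonal (Sum.elim d (fun _ => 0)) := by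
    ext i j
    rcases i with i | i <;> rcases j with j | j <;>
      simp [Matrix.mul_apply, hSdef, diagonal, Finset.sum_ite_eq, Finset.sum_ite_eq',
        ite_and, hsinh, mul_comm]
    · by_cases h : i = j
      · subst h; simp [hσsq]
      · simp [h]
  have hCbsq : Cb * Cb = 1 + S * Sᵀ := by
    rw [hCbdiag, diagonal_mul_diagonal, hSS, ← diagonal_one, diagonal_add]
    refine congrArg diagonal (funext fun i => ?_)
    rcases i with i | i
    · simpa using hcosh2 i
    · simp
  have hCbps : Cb.PosSemidef := by
    rw [hCbdiag]
    refine posSemidef_diagonal_iff.mpr ?_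
    rintro (i | i)
    · exact (Real.cosh_pos _).le
    · exact zero_le_one
  have hR1rhs : (U * Cb * Uᵀ).PosSemidef := by
    have := hCbps.mul_mul_conjTranspose_same U
    rwa [conjTranspose_eq_transpose_of_trivial] at this
  have hR1eq : R₁ = U * Cb * Uᵀ := by
    refine psd_eq_of_sq_eq_sq hR₁.posSemidef hR1rhs ?_
    rw [pow_two, pow_two, hR₁sq]
    have hXXt : X * Xᵀ = U * (S * Sᵀ) * Uᵀ := by
      rw [hXUSV]
      calc (U * S * Vᵀ) * (U * S * Vᵀ)ᵀ
          = U * S * (Vᵀ * V) * Sᵀ * Uᵀ := by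
            rw [transpose_mul, transpose_mul, transpose_transpose]
            simp only [Matrix.mul_assoc]
        _ = U * (S * Sᵀ) * Uᵀ := by rw [hVV, Matrix.mul_one]; simp only [Matrix.mul_assoc]
    calc (1 : Matrix _ _ ℝ) + X * Xᵀ
        = U * Uᵀ + U * (S * Sᵀ) * Uᵀ := by rw [hUUt, hXXt]
      _ = U * (Cb * Cb) * Uᵀ := by rw [hCbsq]; noncomm_ring
      _ = (U * Cb * Uᵀ) * (U * Cb * Uᵀ) := by
          rw [show (U * Cb * Uᵀ) * (U * Cb * Uᵀ)
              = U * Cb * (Uᵀ * U) * (Cb * Uᵀ) from by simp only [Matrix.mul_assoc]]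
          rw [hU, Matrix.mul_one]
          simp only [Matrix.mul_assoc]
  refine ⟨U, V, θ, hU, hVV, ?_, hXUSV⟩
  have hMbl : (Matrix.of fun i j => match j with
      | Sum.inl j' => if i = j' then Real.sinh (θ i) else 0
      | Sum.inr _ => 0) = Sᵀ := by
    ext i j
    rcases j with j | j
    · simp only [Matrix.of_apply, transpose_apply, hSdef]
      by_cases h : i = j
      · subst h; simp
      · simp [h, Ne.symm h]
    · rfl
  rw [fromBlocks_transpose, fromBlocks_multiply, fromBlocks_multiply]
  simp only [transpose_zero, Matrix.mul_zero, Matrix.zero_mul, add_zero, zero_add]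
  rw [hMbl]
  rw [Matrix.fromBlocks_inj]
  refine ⟨?_, ?_, ?_, ?_⟩
  · exact hR1eq
  · exact hXUSV
  · rw [hXUSV]
    rw [transpose_mul, transpose_mul, transpose_transpose]
    simp only [Matrix.mul_assoc]
  · exact hR2eq
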